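/- Let $s \geq 2$ and let $c_1, \dots, c_s$ be pairwise distinct real numbers with $c_s = 1$ and $c_i < 1$ for $i = 1, \dots, s-1$. Let $V_1$ be the $s \times s$ Vandermonde matrix with entries $(V_1)_{ij} = (c_i - 1)^{j-1}$, and define $\tilde{c} = V_1^{-1} (c - e)^s$, where $(c-e)^s$ denotes the vector with components $(c_i - 1)^s$ and $e = (1,\dots,1)^T$. Then $\tilde{c}_1 = 0$ and $\tilde{c}_j \neq 0$ for all $j = 2, \dots, s$. -/

import Mathlib

open Matrix Polynomial

theorem stmt0 (s : ℕ) (hs : 2 ≤ s) (c : Fin s → ℝ)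
    (hc_inj : Function.Injective c)
    (hlast : c ⟨s - 1, by omega⟩ = 1)
    (hlt : ∀ i : Fin s, (i : ℕ) < s - 1 → c i < 1) :
    let V1 : Matrix (Fin s) (Fin s) ℝ := Matrix.of fun i j => (c i - 1) ^ (j : ℕ)
    let ctilde : Fin s → ℝ := V1⁻¹ *ᵥ (fun i => (c i - 1) ^ s)
    ctilde ⟨0, by omega⟩ = 0 ∧ ∀ j : Fin s, 1 ≤ (j : ℕ) → ctilde j ≠ 0 := by
  intro V1 ctilde
  set x : Fin s → ℝ := fun i => c i - 1 with hxdef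
  have hx_inj : Function.Injective x := by
    intro a b h
    exact hc_inj (by simpa [hxdef, sub_left_inj] using h)
  set last : Fin s := ⟨s - 1, by omega⟩ with hlastdef
  have hxlast : x last = 0 := by simp [hxdef, hlast]
  have hxneg : ∀ i : Fin s, i ≠ last → x i < 0 := by
    intro i hi
    have h1 : (i : ℕ) ≠ s - 1 := fun h => hi (Fin.ext h)
    have h2 : (i : ℕ) < s - 1 := by have := i.isLt; omega
    have := hlt i h2
    simp only [hxdef]; linarith
  have hV : V1 = Matrix.vandermonde x := rfl
  have hdet : IsUnit V1.det := by
    rw [hV]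
    exact (Matrix.det_vandermonde_ne_zero_iff.mpr hx_inj).isUnit
  -- the polynomial
  set Q : ℝ[X] := ∏ i ∈ Finset.univ.erase last, (X - C (x i)) with hQ
  set P : ℝ[X] := X ^ s - ∏ i : Fin s, (X - C (x i)) with hP
  have hprod_eq : (∏ i : Fin s, (X - C (x i))) = X * Q := by
    rw [← Finset.mul_prod_erase Finset.univ _ (Finset.mem_univ last), hxlast]
    simp [hQ]
  have hmon : ∀ i ∈ (Finset.univ : Finset (Fin s)), (X - C (x i)).Monic :=
    fun i _ => monic_X_sub_C (x i)
  have hprod_monic : (∏ i : Fin s, (X - C (x i))).Monic := monic_prod_of_monic _ _ hmon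
  have hprod_deg : (∏ i : Fin s, (X - C (x i))).natDegree = s := by
    rw [natDegree_prod_of_monic _ _ hmon]
    simp
  have hPdeg : P.natDegree < s := by
    by_cases hP0 : P = 0
    · rw [hP0]; simp; omega
    · have h1 : ((X : ℝ[X]) ^ s).degree = (∏ i : Fin s, (X - C (x i))).degree := by
        rw [degree_X_pow, Polynomial.degree_eq_natDegree hprod_monic.ne_zero, hprod_deg]
      have h2 : degree P < (s : ℕ) := by
        have := Polynomial.degree_sub_lt h1 (pow_ne_zero s X_ne_zero)
          (by rw [leadingCoeff_X_pow, hprod_monic.leadingCoeff])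
        rwa [degree_X_pow] at this
      exact (Polynomial.natDegree_lt_iff_degree_lt hP0).mpr h2
  -- evaluation at the nodes
  have heval : ∀ i : Fin s, P.eval (x i) = x i ^ s := by
    intro i
    have : (∏ k : Fin s, (X - C (x k))).eval (x i) = 0 := by
      rw [eval_prod]
      exact Finset.prod_eq_zero (Finset.mem_univ i) (by simp)
    simp [hP, eval_sub, eval_pow, this]
  -- ctilde equals the coefficients of P
  set w : Fin s → ℝ := fun j => P.coeff j with hw
  have hmulvec : V1 *ᵥ w = fun i => x i ^ s := by
    funext i
    have := Polynomial.eval_eq_sum_range' hPdeg (x i)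
    rw [heval i] at this
    calc (V1 *ᵥ w) i = ∑ j : Fin s, x i ^ (j : ℕ) * P.coeff j := by
          simp [Matrix.mulVec, dotProduct, hV, Matrix.vandermonde, hw]
      _ = ∑ j ∈ Finset.range s, P.coeff j * x i ^ j := by
          rw [Finset.sum_range fun j => P.coeff j * x i ^ j]
          exact Finset.sum_congr rfl fun j _ => mul_comm _ _
      _ = x i ^ s := this.symm
  have hct : ctilde = w := by
    have : ctilde = V1⁻¹ *ᵥ (V1 *ᵥ w) := by
      show V1⁻¹ *ᵥ (fun i => (c i - 1) ^ s) = _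
      rw [hmulvec]
    rw [this, Matrix.mulVec_mulVec, Matrix.nonsing_inv_mul _ hdet, Matrix.one_mulVec]
  -- coefficient computations
  have hcard : (Finset.univ.erase last).card = s - 1 := by
    rw [Finset.card_erase_of_mem (Finset.mem_univ last), Finset.card_univ, Fintype.card_fin]
  have hQcoeff : ∀ k : ℕ, k ≤ s - 1 → 0 < Q.coeff k := by
    intro k hk
    have hQ' : Q = ∏ i ∈ Finset.univ.erase last, (X + C (-(x i))) := by
      simp [hQ, sub_eq_add_neg, map_neg]
    rw [hQ', Finset.prod_X_add_C_coeff _ _ (by rw [hcard]; exact hk)]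
    apply Finset.sum_pos
    · intro t ht
      apply Finset.prod_pos
      intro i hi
      have : i ∈ Finset.univ.erase last := (Finset.mem_powersetCard.mp ht).1 hi
      have := hxneg i (Finset.mem_erase.mp this).1
      linarith
    · exact Finset.powersetCard_nonempty.mpr (by omega)
  have hcoeff0 : P.coeff 0 = 0 := by
    rw [hP, hprod_eq, coeff_sub, coeff_X_pow, mul_coeff_zero, coeff_X_zero]
    simp; omega
  have hcoeffj : ∀ j : Fin s, 1 ≤ (j : ℕ) → P.coeff j < 0 := by
    intro j hj
    have hjs : (j : ℕ) ≠ s := by have := j.isLt; omega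
    obtain ⟨m, hm⟩ : ∃ m, (j : ℕ) = m + 1 := ⟨(j : ℕ) - 1, by omega⟩
    have hm1 : m ≤ s - 1 := by have := j.isLt; omega
    rw [hP, hprod_eq, coeff_sub, coeff_X_pow, if_neg hjs, hm, coeff_X_mul]
    have := hQcoeff m hm1
    linarith
  constructor
  · rw [hct]
    simpa [hw] using hcoeff0
  · intro j hj
    rw [hct]
    have := hcoeffj j hj
    simp only [hw]
    linarith
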